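/- Let q be a prime power with q ≡ 3 (mod 4), and write q = 2^A·m − 1 with m odd and A ≥ 2 (so 2^A exactly divides q+1). If n ≥ A, then over F_q the polynomial x^{2^n} + 1 factors as the product of 2^{A−1} irreducible trinomials: x^{2^n} + 1 = ∏_{δ ∈ Δ} (x^{2^{n−A+1}} + δ x^{2^{n−A}} − 1), where Δ ⊆ F_q is the set of roots in F_q of the Dickson polynomial D_{2^{A−1}}(x, −1), each factor is irreducible over F_q, and |Δ| = 2^{A−1}. -/

import Mathlib

open Polynomial

lemma aux_dickson_eval {R : Type*} [CommRing R] (x y : R) :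
    ∀ n, (dickson 1 (x * y) n).eval (x + y) = x ^ n + y ^ n
  | 0 => by norm_num [dickson_zero]
  | 1 => by simp [dickson_one]
  | n + 2 => by
    rw [dickson_add_two]
    simp only [eval_sub, eval_mul, eval_X, eval_C,
      aux_dickson_eval x y n, aux_dickson_eval x y (n + 1)]
    ring

lemma aux_dickson_two {R : Type*} [CommRing R] (a : R) :
    dickson 1 a 2 = X ^ 2 - C (2 * a) := by
  rw [dickson_two]
  simp only [Nat.cast_one, map_ofNat, C_mul]
  ring_nf

lemma aux_dickson_monic' {R : Type*} [CommRing R] [Nontrivial R] (a : R) :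
    ∀ n : ℕ, (dickson 1 a (n + 1)).Monic ∧
      (dickson 1 a (n + 1)).degree = ((n + 1 : ℕ) : WithBot ℕ)
  | 0 => by simp [dickson_one, monic_X]
  | 1 => by
    have h : degree (-C (2 * a)) < degree (X ^ 2 : R[X]) := by
      rw [degree_neg, degree_X_pow]
      exact lt_of_le_of_lt (degree_C_le) (by norm_num)
    constructor
    · rw [aux_dickson_two, sub_eq_add_neg]
      exact (monic_X_pow 2).add_of_left h
    · rw [aux_dickson_two, sub_eq_add_neg, degree_add_eq_left_of_degree_lt h, degree_X_pow]
  | n + 2 => by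
    obtain ⟨h1m, h1d⟩ := aux_dickson_monic' a n
    obtain ⟨h2m, h2d⟩ := aux_dickson_monic' a (n + 1)
    have hx : (X * dickson 1 a (n + 2)).Monic := monic_X.mul h2m
    have hxd : (X * dickson 1 a (n + 2)).degree = ((n + 3 : ℕ) : WithBot ℕ) := by
      rw [h2m.degree_mul, degree_X, h2d]
      push_cast
      ring
    have hlt : degree (-(C a * dickson 1 a (n + 1))) < (X * dickson 1 a (n + 2)).degree := by
      rw [degree_neg, hxd]
      refine lt_of_le_of_lt (degree_mul_le _ _) ?_
      refine lt_of_le_of_lt (add_le_add degree_C_le le_rfl) ?_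
      rw [zero_add, h1d]
      exact_mod_cast (by omega : n + 1 < n + 3)
    constructor
    · rw [dickson_add_two, sub_eq_add_neg]
      exact hx.add_of_left hlt
    · rw [dickson_add_two, sub_eq_add_neg, degree_add_eq_left_of_degree_lt hlt, hxd]

lemma aux_dickson_monic {R : Type*} [CommRing R] [Nontrivial R] (a : R) {n : ℕ} (hn : 1 ≤ n) :
    (dickson 1 a n).Monic ∧ (dickson 1 a n).natDegree = n := by
  obtain ⟨k, rfl⟩ : ∃ k, n = k + 1 := ⟨n - 1, by omega⟩
  obtain ⟨h1, h2⟩ := aux_dickson_monic' a k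
  exact ⟨h1, natDegree_eq_of_degree_eq_some h2⟩

-- 2-adic valuation of q^(2^(j+1)) - 1 equals A + j + 1
lemma aux_nt_pow {q A : ℕ} (hA : 2 ≤ A) (hq3 : q % 4 = 3)
    (hqm : ∃ c : ℤ, Odd c ∧ (q : ℤ) + 1 = 2 ^ A * c) :
    ∀ j : ℕ, ∃ c : ℤ, Odd c ∧ (q : ℤ) ^ (2 ^ (j + 1)) - 1 = 2 ^ (A + j + 1) * c := by
  intro j
  induction j with
  | zero =>
    obtain ⟨c, hc, hqc⟩ := hqm
    obtain ⟨k, hk⟩ : ∃ k : ℤ, (q : ℤ) = 4 * k + 3 := ⟨(q : ℤ) / 4, by omega⟩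
    refine ⟨(2 * k + 1) * c, (odd_two_mul_add_one k).mul hc, ?_⟩
    have h1 : (q : ℤ) ^ (2 ^ 1) - 1 = ((q : ℤ) - 1) * ((q : ℤ) + 1) := by ring
    rw [h1, hqc, hk]
    ring
  | succ j ih =>
    obtain ⟨c, hc, hqc⟩ := ih
    have hsq : (q : ℤ) ^ 2 ^ (j + 2) - 1 =
        ((q : ℤ) ^ 2 ^ (j + 1) - 1) * ((q : ℤ) ^ 2 ^ (j + 1) + 1) := by
      have h2 : (2:ℕ) ^ (j + 2) = 2 ^ (j + 1) * 2 := by rw [pow_succ]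
      rw [h2, pow_mul]
      ring
    have hplus : (q : ℤ) ^ 2 ^ (j + 1) + 1 = 2 * (2 ^ (A + j) * c + 1) := by
      have : (q : ℤ) ^ 2 ^ (j + 1) = 2 ^ (A + j + 1) * c + 1 := by omega
      rw [this]
      rw [show A + j + 1 = (A + j) + 1 by ring, pow_succ]
      ring
    refine ⟨c * (2 ^ (A + j) * c + 1), ?_, ?_⟩
    · refine hc.mul ?_
      obtain ⟨B, hB⟩ : ∃ B, A + j = B + 1 := ⟨A + j - 1, by omega⟩
      have : Even ((2:ℤ) ^ (A + j) * c) := by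
        rw [hB, pow_succ]
        exact ⟨2 ^ B * c, by ring⟩
      obtain ⟨t, ht⟩ := this
      exact ⟨t, by omega⟩
    · rw [hsq, hqc, hplus]
      rw [show A + (j+1) + 1 = (A + j + 1) + 1 by ring, pow_succ]
      ring

lemma aux_odd_geom_sum {q : ℕ} (hq : q % 2 = 1) (t : ℕ) {r : ℕ} (hr : Odd r) :
    Odd (∑ i ∈ Finset.range r, ((q : ℤ) ^ t) ^ i) := by
  rw [Int.odd_iff]
  have hcast : ((∑ i ∈ Finset.range r, ((q : ℤ) ^ t) ^ i : ℤ) : ZMod 2) = 1 := by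
    push_cast
    have hq2 : ((q : ZMod 2)) = 1 := by
      have : ((q % 2 : ℕ) : ZMod 2) = (q : ZMod 2) := ZMod.natCast_mod q 2
      rw [← this, hq]
      norm_num
    rw [hq2]
    simp only [one_pow, Finset.sum_const, Finset.card_range, nsmul_eq_mul, mul_one]
    have : ((r % 2 : ℕ) : ZMod 2) = (r : ZMod 2) := ZMod.natCast_mod r 2
    rw [← this, Nat.odd_iff.mp hr]
    norm_num
  by_contra h
  have h0 : (∑ i ∈ Finset.range r, ((q : ℤ) ^ t) ^ i) % 2 = 0 := by omega
  have : ((∑ i ∈ Finset.range r, ((q : ℤ) ^ t) ^ i : ℤ) : ZMod 2) = 0 := by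
    rw [ZMod.intCast_zmod_eq_zero_iff_dvd]
    omega
  rw [hcast] at this
  exact one_ne_zero this

lemma aux_nt {q A n : ℕ} (hq3 : q % 4 = 3) (hA : 2 ≤ A)
    (hqm : ∃ c : ℤ, Odd c ∧ (q : ℤ) + 1 = 2 ^ A * c) (hn : A ≤ n)
    {e : ℕ} (he : 1 ≤ e) (hdvd : (2:ℤ) ^ (n+1) ∣ (q:ℤ) ^ e - 1) :
    2 ^ (n + 1 - A) ≤ e := by
  by_contra hlt
  push_neg at hlt
  obtain ⟨j, r, hr, hjr⟩ := Nat.exists_eq_two_pow_mul_odd (show e ≠ 0 by omega)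
  have hrpos : 1 ≤ r := hr.pos
  have h2je : 2 ^ j ≤ e := by
    calc 2 ^ j = 2 ^ j * 1 := by ring
    _ ≤ 2 ^ j * r := by exact Nat.mul_le_mul_left _ hrpos
    _ = e := hjr.symm
  have hjlt : j < n + 1 - A := by
    by_contra hj
    push_neg at hj
    exact absurd (le_trans (Nat.pow_le_pow_right (by norm_num) hj) h2je) (by omega)
  have hjn : A + j ≤ n := by omega
  set x : ℤ := (q:ℤ) ^ (2 ^ j) with hx
  set S : ℤ := ∑ i ∈ Finset.range r, x ^ i with hS
  have hSodd : Odd S := aux_odd_geom_sum (by omega) (2 ^ j) hr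
  have hqe : (q:ℤ) ^ e - 1 = S * (x - 1) := by
    rw [hS, hx, geom_sum_mul, ← pow_mul, ← hjr]
  obtain ⟨v, c, hcodd, hx1, hv1, hvn⟩ :
      ∃ (v : ℕ) (c : ℤ), Odd c ∧ x - 1 = 2 ^ v * c ∧ 1 ≤ v ∧ v ≤ n := by
    rcases Nat.eq_zero_or_pos j with hj0 | hjpos
    · obtain ⟨k, hk⟩ : ∃ k : ℤ, (q : ℤ) = 4 * k + 3 := ⟨(q : ℤ) / 4, by omega⟩
      refine ⟨1, 2 * k + 1, odd_two_mul_add_one k, ?_, le_rfl, by omega⟩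
      rw [hx, hj0, pow_zero, pow_one, hk]
      ring
    · obtain ⟨j', rfl⟩ : ∃ j', j = j' + 1 := ⟨j - 1, by omega⟩
      obtain ⟨c, hcodd, hc⟩ := aux_nt_pow hA hq3 hqm j'
      exact ⟨A + j' + 1, c, hcodd, hc, by omega, by omega⟩
  have hfinal : (q:ℤ) ^ e - 1 = 2 ^ v * (c * S) := by
    rw [hqe, hx1]; ring
  have hdvd2 : (2:ℤ) ^ v * 2 ∣ 2 ^ v * (c * S) := by
    refine dvd_trans ?_ (hfinal ▸ hdvd)
    rw [← pow_succ]
    exact pow_dvd_pow 2 (by omega)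
  have h2cs : (2:ℤ) ∣ c * S := by
    have h2v : (2:ℤ) ^ v ≠ 0 := pow_ne_zero _ (by norm_num)
    exact (mul_dvd_mul_iff_left h2v).mp hdvd2
  have : Odd (c * S) := hcodd.mul hSodd
  rw [Int.odd_iff] at this
  omega

lemma aux_fixed {F K : Type*} [Field F] [Fintype F] [Field K] [Algebra F K]
    (x : K) (hx : x ^ Fintype.card F = x) : ∃ a : F, algebraMap F K a = x := by
  classical
  set q := Fintype.card F with hq
  have hq1 : 1 < q := Fintype.one_lt_card
  set Φ : K[X] := X ^ q - C 1 * X with hΦ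
  have hΦm : Φ.Monic := by
    rw [hΦ]
    refine (monic_X_pow q).add_of_left ?_
    rw [degree_neg, degree_X_pow]
    refine lt_of_le_of_lt (degree_mul_le _ _) ?_
    refine lt_of_le_of_lt (add_le_add degree_C_le degree_X_le) ?_
    exact_mod_cast (by omega : 0 + 1 < q)
  have hΦne : Φ ≠ 0 := hΦm.ne_zero
  have hΦdeg : Φ.natDegree ≤ q := by
    rw [hΦ]
    refine le_trans (natDegree_sub_le _ _) ?_
    simp only [natDegree_X_pow, one_mul, C_1]
    simp [natDegree_X_le]
    omega
  have hroot : ∀ a : F, algebraMap F K a ∈ Φ.roots := by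
    intro a
    rw [mem_roots hΦne]
    simp only [hΦ, IsRoot, eval_sub, eval_mul, eval_pow, eval_X, eval_C, one_mul]
    rw [← map_pow, FiniteField.pow_card, sub_self]
  have hsub : Finset.univ.image (algebraMap F K) ⊆ Φ.roots.toFinset := by
    intro z hz
    obtain ⟨a, _, rfl⟩ := Finset.mem_image.mp hz
    exact Multiset.mem_toFinset.mpr (hroot a)
  have hcard1 : (Finset.univ.image (algebraMap F K)).card = q := by
    rw [Finset.card_image_of_injective _ (algebraMap F K).injective, Finset.card_univ]
  have hcard2 : Φ.roots.toFinset.card ≤ q :=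
    le_trans (Multiset.toFinset_card_le _) (le_trans (card_roots' Φ) hΦdeg)
  have heq : Finset.univ.image (algebraMap F K) = Φ.roots.toFinset :=
    Finset.eq_of_subset_of_card_le hsub (by omega)
  have hxroot : x ∈ Φ.roots.toFinset := by
    rw [Multiset.mem_toFinset, mem_roots hΦne]
    simp only [hΦ, IsRoot, eval_sub, eval_mul, eval_pow, eval_X, eval_C, one_mul]
    rw [hx, sub_self]
  rw [← heq] at hxroot
  obtain ⟨a, _, ha⟩ := Finset.mem_image.mp hxroot
  exact ⟨a, ha⟩

lemma aux_deg {F : Type*} [Field F] [Fintype F] (hchar : ringChar F ≠ 2) {N : ℕ}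
    {g : F[X]} (hg : Irreducible g) (hdvd : g ∣ X ^ (2 ^ N) + 1) :
    (2:ℤ) ^ (N + 1) ∣ (Fintype.card F : ℤ) ^ g.natDegree - 1 := by
  classical
  haveI := Fact.mk hg
  set E := AdjoinRoot g with hE
  have hg0 : g ≠ 0 := hg.ne_zero
  haveI : Module.Finite F E := Module.Finite.of_basis (AdjoinRoot.powerBasis hg0).basis
  haveI : Finite E := Module.finite_of_finite F
  haveI : Fintype E := Fintype.ofFinite E
  have hcardE : Fintype.card E = Fintype.card F ^ g.natDegree := by
    rw [Module.card_eq_pow_finrank (K := F) (V := E), (AdjoinRoot.powerBasis hg0).finrank,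
      AdjoinRoot.powerBasis_dim]
  -- the root
  set β : E := AdjoinRoot.root g with hβ
  have hβpow : β ^ (2 ^ N) = -1 := by
    have h0 : AdjoinRoot.mk g (X ^ (2 ^ N) + 1) = 0 := AdjoinRoot.mk_eq_zero.mpr hdvd
    have : β ^ (2 ^ N) + 1 = 0 := by
      rw [hβ, ← AdjoinRoot.mk_X (f := g)]
      rw [← map_pow, ← map_one (AdjoinRoot.mk g), ← map_add]
      exact h0
    linear_combination this
  have hcharE : ringChar E = ringChar F := (Algebra.ringChar_eq F E).symm
  have hne : (-1 : E) ≠ 1 := Ring.neg_one_ne_one_of_char_ne_two (by rw [hcharE]; exact hchar)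
  have hβne : β ≠ 0 := by
    intro h
    rw [h, zero_pow (by positivity)] at hβpow
    exact one_ne_zero (by linear_combination hβpow)
  set b : Eˣ := Units.mk0 β hβne with hb
  have hbpow : b ^ (2 ^ N) = -1 := by
    ext
    push_cast [hb]
    exact hβpow
  have hb1 : b ^ (2 ^ (N + 1)) = 1 := by
    rw [pow_succ, pow_mul, hbpow, neg_one_sq]
  have hbne1 : b ^ (2 ^ N) ≠ 1 := by
    rw [hbpow]
    intro h
    apply hne
    have := congrArg (Units.val) h
    simpa using this
  have horder : orderOf b = 2 ^ (N + 1) := orderOf_eq_prime_pow hbne1 hb1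
  have hdvdcard : 2 ^ (N + 1) ∣ Fintype.card Eˣ := horder ▸ orderOf_dvd_card
  rw [Fintype.card_units, hcardE] at hdvdcard
  have h1le : 1 ≤ Fintype.card F ^ g.natDegree := Nat.one_le_pow _ _ Fintype.card_pos
  have := Int.natCast_dvd_natCast.mpr hdvdcard
  push_cast [Nat.cast_sub h1le] at this
  exact_mod_cast this

lemma aux_trinomial_monic {F : Type*} [Field F] (δ : F) {s t : ℕ} (hst : s < t) :
    (X ^ t + C δ * X ^ s - 1 : F[X]).Monic ∧ (X ^ t + C δ * X ^ s - 1 : F[X]).natDegree = t := by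
  have h : degree (C δ * X ^ s - 1 : F[X]) < degree (X ^ t : F[X]) := by
    rw [degree_X_pow]
    refine lt_of_le_of_lt (degree_sub_le _ _) ?_
    rw [max_lt_iff]
    constructor
    · refine lt_of_le_of_lt (degree_mul_le _ _) ?_
      refine lt_of_le_of_lt (add_le_add degree_C_le le_rfl) ?_
      rw [zero_add, degree_X_pow]
      exact_mod_cast hst
    · refine lt_of_le_of_lt degree_one_le ?_
      exact_mod_cast (by omega : 0 < t)
  have hassoc : (X ^ t + C δ * X ^ s - 1 : F[X]) = X ^ t + (C δ * X ^ s - 1) := by ring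
  constructor
  · rw [hassoc]
    exact (monic_X_pow t).add_of_left h
  · rw [hassoc]
    apply natDegree_eq_of_degree_eq_some
    rw [degree_add_eq_left_of_degree_lt h, degree_X_pow]

lemma aux_monic_dvd_eq {F : Type*} [Field F] {g T : F[X]} (hg : g.Monic) (hT : T.Monic)
    (hdvd : g ∣ T) (hdeg : T.natDegree ≤ g.natDegree) : T = g := by
  obtain ⟨c, hc⟩ := hdvd
  have hc0 : c ≠ 0 := by
    rintro rfl
    rw [mul_zero] at hc
    exact hT.ne_zero hc
  have hdeg2 : T.natDegree = g.natDegree + c.natDegree := by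
    rw [hc, natDegree_mul hg.ne_zero hc0]
  have hcdeg : c.natDegree = 0 := by omega
  have hlc : (1 : F) = c.leadingCoeff := by
    have := hT.leadingCoeff
    rw [hc, leadingCoeff_mul, hg.leadingCoeff, one_mul] at this
    exact this.symm
  have hcC : c = C (c.coeff 0) := eq_C_of_natDegree_le_zero (le_of_eq hcdeg)
  have : c = 1 := by
    rw [hcC]
    rw [leadingCoeff, hcdeg] at hlc
    rw [← hlc, C_1]
  rw [hc, this, mul_one]

/-- Factorization of `x^(2^n) + 1` over `F_q`, `q ≡ 3 (mod 4)`, `q = 2^A·m − 1` with `m`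
odd and `A ≥ 2`, in the range `n ≥ A`: it is the product of the `2^(A-1)` irreducible
trinomials `x^(2^(n-A+1)) + δ·x^(2^(n-A)) − 1` where `δ` runs over the set `Δ` of roots
in `F_q` of the Dickson polynomial (of the first kind) `D_{2^(A-1)}(x, −1)`. -/
theorem pow_two_pow_add_one_factorization_case_b
    {q A m : ℕ} (F : Type*) [Field F] [Fintype F] [DecidableEq F]
    (hcard : Fintype.card F = q) (hq3 : q % 4 = 3)
    (hm : Odd m) (hA : 2 ≤ A) (hq : q = 2 ^ A * m - 1)
    (n : ℕ) (hn : A ≤ n) :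
    ∀ Δ : Finset F, Δ = (Polynomial.dickson 1 (-1 : F) (2 ^ (A - 1))).roots.toFinset →
      ((X ^ (2 ^ n) + 1 : F[X]) =
        ∏ δ ∈ Δ, (X ^ (2 ^ (n - A + 1)) + C δ * X ^ (2 ^ (n - A)) - 1)) ∧
      (∀ δ ∈ Δ, Irreducible (X ^ (2 ^ (n - A + 1)) + C δ * X ^ (2 ^ (n - A)) - 1 : F[X])) ∧
      Δ.card = 2 ^ (A - 1) := by
  classical
  intro Δ hΔ
  -- arithmetic preliminaries
  have hmpos : 0 < m := hm.pos
  have h2Am : 1 ≤ 2 ^ A * m := Nat.mul_pos (Nat.two_pow_pos A) hmpos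
  have hq1 : q + 1 = 2 ^ A * m := by omega
  have hq2 : q % 2 = 1 := by omega
  set k : ℕ := 2 ^ (A - 1) with hk
  have hk1 : 1 ≤ k := Nat.one_le_two_pow
  have hk2 : 2 * k = 2 ^ A := by
    rw [hk, ← pow_succ']
    congr 1
    omega
  have hkeven : Even k := Nat.even_pow.mpr ⟨even_two, by omega⟩
  -- characteristic facts
  have hcharF : ringChar F ≠ 2 := by
    rw [Ne, FiniteField.even_card_iff_char_two, hcard]
    omega
  set p : ℕ := ringChar F with hp
  haveI hpchar : CharP F p := ringChar.charP F
  obtain ⟨f, hpprime, hqpf⟩ : ∃ f : ℕ+, p.Prime ∧ q = p ^ (f : ℕ) := by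
    obtain ⟨f, h1, h2⟩ := FiniteField.card F p
    exact ⟨f, h1, by rw [← hcard, h2]⟩
  -- the algebraic closure
  set K := AlgebraicClosure F with hK
  set ψ : F →+* K := algebraMap F K with hψ
  have hψinj : Function.Injective ψ := ψ.injective
  haveI hKchar : CharP K p := charP_of_injective_algebraMap (algebraMap F K).injective p
  have h2K : (2 : K) ≠ 0 := by
    rw [Ne, show ((2 : K)) = ((2 : ℕ) : K) by norm_num, CharP.cast_eq_zero_iff K p 2]
    intro h
    exact hcharF ((Nat.prime_dvd_prime_iff_eq hpprime Nat.prime_two).mp h)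
  have h2KA : ((2 ^ A : ℕ) : K) ≠ 0 := by
    push_cast
    exact pow_ne_zero _ h2K
  have hfrob : ∀ x y : K, (x - y) ^ q = x ^ q - y ^ q := by
    intro x y
    haveI := Fact.mk hpprime
    rw [hqpf]
    exact sub_pow_char_pow x y (f : ℕ)
  -- the Dickson polynomial
  set D : F[X] := dickson 1 (-1 : F) k with hD
  obtain ⟨hDmonic, hDdeg⟩ := aux_dickson_monic (-1 : F) hk1
  have hD0 : D ≠ 0 := hDmonic.ne_zero
  -- the polynomial X^(2^A) + 1 over K
  set PK : K[X] := X ^ (2 ^ A) + 1 with hPK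
  have hPsub : PK = X ^ (2 ^ A) - C (-1 : K) := by
    rw [hPK, map_neg, C_1, sub_neg_eq_add]
  have h2A0 : (2 : ℕ) ^ A ≠ 0 := by positivity
  have hPmonic : PK.Monic := by
    rw [hPsub]
    exact monic_X_pow_sub_C _ h2A0
  have hPdeg : PK.natDegree = 2 ^ A := by
    rw [hPsub, natDegree_X_pow_sub_C]
  have hPsep : PK.Separable := by
    rw [hPsub]
    exact separable_X_pow_sub_C (-1 : K) h2KA (neg_ne_zero.mpr one_ne_zero)
  have hPsplits : PK.Splits := IsAlgClosed.splits PK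
  have hProots_card : Multiset.card PK.roots = 2 ^ A := by
    rw [splits_iff_card_roots.mp hPsplits, hPdeg]
  have hPnodup : PK.roots.Nodup := nodup_roots hPsep
  -- roots of PK
  have hzpow : ∀ z : K, z ∈ PK.roots → z ^ (2 ^ A) = -1 := by
    intro z hz
    have h := (mem_roots'.mp hz).2
    rw [hPK] at h
    simp only [IsRoot, eval_add, eval_pow, eval_X, eval_one] at h
    linear_combination h
  have hz0 : ∀ z : K, z ^ (2 ^ A) = -1 → z ≠ 0 := by
    intro z hz h0
    rw [h0, zero_pow h2A0] at hz
    exact one_ne_zero (by linear_combination hz)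
  -- the key map from roots of PK into Δ
  have hmain : ∀ z : K, z ^ (2 ^ A) = -1 → ∃ a ∈ Δ, ψ a = z⁻¹ - z := by
    intro z hzA
    have hz0' : z ≠ 0 := hz0 z hzA
    have hqpow : z ^ (q + 1) = -1 := by
      rw [hq1, pow_mul, hzA]
      exact hm.neg_one_pow
    have hzq : z ^ q = -z⁻¹ := by
      have h1 : z ^ q * z = -1 := by
        rw [← pow_succ]
        exact hqpow
      have h3 : z * z⁻¹ = 1 := mul_inv_cancel₀ hz0'
      linear_combination z⁻¹ * h1 - z ^ q * h3
    have hinvq : (z⁻¹) ^ q = -z := by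
      rw [inv_pow, hzq, inv_neg, inv_inv]
    have hfix : (z⁻¹ - z) ^ (Fintype.card F) = z⁻¹ - z := by
      rw [hcard, hfrob, hinvq, hzq]
      ring
    obtain ⟨a, ha⟩ := aux_fixed (z⁻¹ - z) hfix
    refine ⟨a, ?_, ha⟩
    rw [hΔ, Multiset.mem_toFinset, mem_roots hD0]
    have heval : ψ (D.eval a) = (dickson 1 (-1 : K) k).eval (ψ a) := by
      have hmap : (dickson 1 (-1 : K) k) = map ψ D := by
        rw [hD, map_dickson]
        congr 1
        rw [map_neg, map_one]
      rw [hmap, eval_map, eval₂_at_apply]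
    have hcomp : (dickson 1 (-1 : K) k).eval (ψ a) = (z⁻¹) ^ k + (-z) ^ k := by
      have := aux_dickson_eval (z⁻¹) (-z) k
      rw [mul_neg, inv_mul_cancel₀ hz0'] at this
      rw [ha]
      rw [show z⁻¹ - z = z⁻¹ + -z by ring]
      exact this
    have hzero : (z⁻¹) ^ k + (-z) ^ k = 0 := by
      rw [hkeven.neg_pow]
      have hmul : z ^ k * ((z⁻¹) ^ k + z ^ k) = 0 := by
        rw [mul_add, ← mul_pow, mul_inv_cancel₀ hz0', one_pow, ← pow_add]
        rw [show k + k = 2 * k by ring, hk2, hzA]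
        ring
      rcases mul_eq_zero.mp hmul with h | h
      · exact absurd h (pow_ne_zero _ hz0')
      · exact h
    have : ψ (D.eval a) = 0 := by rw [heval, hcomp, hzero]
    have h0 : D.eval a = 0 := hψinj (by rw [this, map_zero])
    exact h0
  -- cardinality of Δ
  have hcard_up : Δ.card ≤ k := by
    rw [hΔ]
    exact le_trans (Multiset.toFinset_card_le _) (le_trans (card_roots' _) (le_of_eq hDdeg))
  set S : Finset K := PK.roots.toFinset with hSdef
  have hScard : S.card = 2 ^ A := by
    rw [hSdef, Multiset.toFinset_card_of_nodup hPnodup, hProots_card]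
  set φ : K → K := fun z => z⁻¹ - z with hφ
  have hmapsto : ∀ z ∈ S, φ z ∈ Δ.image ψ := by
    intro z hz
    obtain ⟨a, haΔ, ha⟩ := hmain z (hzpow z (Multiset.mem_toFinset.mp hz))
    exact Finset.mem_image.mpr ⟨a, haΔ, ha⟩
  have hSz0 : ∀ z ∈ S, z ≠ 0 := fun z hz =>
    hz0 z (hzpow z (Multiset.mem_toFinset.mp hz))
  have hfiber : ∀ b ∈ Δ.image ψ, (S.filter (fun z => φ z = b)).card ≤ 2 := by
    intro b _
    rcases Finset.eq_empty_or_nonempty (S.filter (fun z => φ z = b)) with he | hne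
    · rw [he]; norm_num
    obtain ⟨z₀, hz₀⟩ := hne
    rw [Finset.mem_filter] at hz₀
    obtain ⟨hz₀S, hz₀φ⟩ := hz₀
    have hz₀0 : z₀ ≠ 0 := hSz0 z₀ hz₀S
    have hsubset : S.filter (fun z => φ z = b) ⊆ {z₀, -z₀⁻¹} := by
      intro w hw
      rw [Finset.mem_filter] at hw
      obtain ⟨hwS, hwφ⟩ := hw
      have hw0 : w ≠ 0 := hSz0 w hwS
      have hwφ' : w⁻¹ - w = b := hwφ
      have hz₀φ' : z₀⁻¹ - z₀ = b := hz₀φ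
      have heq : w⁻¹ - w = z₀⁻¹ - z₀ := by rw [hwφ', hz₀φ']
      have hfac : (z₀ - w) * (1 + w * z₀) = 0 := by
        have h1 : (w⁻¹ - w) * (w * z₀) = (z₀⁻¹ - z₀) * (w * z₀) := by rw [heq]
        have h2 : w⁻¹ * w = 1 := inv_mul_cancel₀ hw0
        have h3 : z₀⁻¹ * z₀ = 1 := inv_mul_cancel₀ hz₀0
        linear_combination h1 - z₀ * h2 + w * h3
      rcases mul_eq_zero.mp hfac with h | h
      · have : w = z₀ := by linear_combination -h
        simp [this]
      · have : w = -z₀⁻¹ := by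
          have hwz : w * z₀ = -1 := by linear_combination h
          have h3 : z₀ * z₀⁻¹ = 1 := mul_inv_cancel₀ hz₀0
          linear_combination z₀⁻¹ * hwz - w * h3
        simp [this]
    refine le_trans (Finset.card_le_card hsubset) ?_
    refine le_trans (Finset.card_insert_le _ _) ?_
    norm_num
  have hcard_low : 2 ^ A ≤ 2 * Δ.card := by
    calc 2 ^ A = S.card := hScard.symm
    _ ≤ 2 * (Δ.image ψ).card := Finset.card_le_mul_card_image_of_maps_to hmapsto 2 hfiber
    _ ≤ 2 * Δ.card := by
        exact Nat.mul_le_mul_left 2 Finset.card_image_le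
  have hcardΔ : Δ.card = k := by omega
  -- the product of quadratics
  set G : F[X] := ∏ δ ∈ Δ, (X ^ 2 + C δ * X - 1) with hG
  have hfactor : ∀ δ : F, (X ^ 2 + C δ * X - 1 : F[X]).Monic ∧
      (X ^ 2 + C δ * X - 1 : F[X]).natDegree = 2 := by
    intro δ
    have := aux_trinomial_monic δ (show 1 < 2 by norm_num)
    rwa [pow_one] at this
  have hGmonic : G.Monic := monic_prod_of_monic _ _ (fun δ _ => (hfactor δ).1)
  have hGdeg : G.natDegree = 2 ^ A := by
    rw [hG, natDegree_prod _ _ (fun δ _ => (hfactor δ).1.ne_zero)]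
    rw [Finset.sum_congr rfl (fun δ _ => (hfactor δ).2), Finset.sum_const, smul_eq_mul,
      hcardΔ, mul_comm, hk2]
  have hGK : G.map ψ = ∏ δ ∈ Δ, (X ^ 2 + C (ψ δ) * X - 1) := by
    rw [hG, Polynomial.map_prod]
    congr 1
    ext δ : 1
    rw [Polynomial.map_sub, Polynomial.map_add, Polynomial.map_pow, Polynomial.map_mul,
      map_X, map_C, Polynomial.map_one]
  -- PK divides G.map ψ
  have hPdvd : PK ∣ G.map ψ := by
    have hGK0 : G.map ψ ≠ 0 := (hGmonic.map ψ).ne_zero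
    have hle : PK.roots ≤ (G.map ψ).roots := by
      rw [Multiset.le_iff_count]
      intro z
      by_cases hz : z ∈ PK.roots
      · have h1 : Multiset.count z PK.roots ≤ 1 := Multiset.nodup_iff_count_le_one.mp hPnodup z
        have h2 : 1 ≤ Multiset.count z (G.map ψ).roots := by
          rw [Multiset.one_le_count_iff_mem, mem_roots hGK0]
          obtain ⟨a, haΔ, ha⟩ := hmain z (hzpow z hz)
          have hz0' : z ≠ 0 := hz0 z (hzpow z hz)
          rw [IsRoot, hGK, eval_prod]
          refine Finset.prod_eq_zero haΔ ?_
          rw [eval_sub, eval_add, eval_pow, eval_mul, eval_X, eval_C, eval_one, ha]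
          have h3 : z⁻¹ * z = 1 := inv_mul_cancel₀ hz0'
          linear_combination h3
        omega
      · rw [Multiset.count_eq_zero_of_notMem hz]
        omega
    calc PK = (PK.roots.map fun a => X - C a).prod :=
          hPsplits.eq_prod_roots_of_monic hPmonic
    _ ∣ ((G.map ψ).roots.map fun a => X - C a).prod :=
          Multiset.prod_dvd_prod_of_le (Multiset.map_le_map hle)
    _ ∣ G.map ψ := prod_multiset_X_sub_C_dvd _
  have hGKdeg : (G.map ψ).natDegree = 2 ^ A := by
    rw [hGmonic.natDegree_map, hGdeg]
  have heqGK : G.map ψ = PK := aux_monic_dvd_eq hPmonic (hGmonic.map ψ) hPdvd (by omega)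
  have hGeq : G = X ^ (2 ^ A) + 1 := by
    apply map_injective ψ hψinj
    rw [heqGK, Polynomial.map_add, Polynomial.map_pow, map_X, Polynomial.map_one, hPK]
  -- the factorization via composition
  have hexp1 : 2 ^ (n - A) * 2 ^ A = 2 ^ n := by
    rw [← pow_add]
    congr 1
    omega
  have hexp2 : 2 ^ (n - A) * 2 = 2 ^ (n - A + 1) := by
    rw [← pow_succ]
  have hfact : (X ^ (2 ^ n) + 1 : F[X]) =
      ∏ δ ∈ Δ, (X ^ (2 ^ (n - A + 1)) + C δ * X ^ (2 ^ (n - A)) - 1) := by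
    have h1 : (X ^ (2 ^ n) + 1 : F[X]) = G.comp (X ^ (2 ^ (n - A))) := by
      rw [hGeq, add_comp, pow_comp, X_comp, one_comp, ← pow_mul, hexp1]
    rw [h1, hG, prod_comp]
    refine Finset.prod_congr rfl ?_
    intro δ _
    rw [sub_comp, add_comp, pow_comp, mul_comp, C_comp, X_comp, one_comp, ← pow_mul, hexp2]
  refine ⟨hfact, ?_, by rw [hcardΔ]⟩
  -- irreducibility
  intro δ hδ
  set T : F[X] := X ^ (2 ^ (n - A + 1)) + C δ * X ^ (2 ^ (n - A)) - 1 with hT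
  have hst : 2 ^ (n - A) < 2 ^ (n - A + 1) := Nat.pow_lt_pow_right (by norm_num) (by omega)
  obtain ⟨hTmonic, hTdeg⟩ := aux_trinomial_monic δ hst
  rw [← hT] at hTmonic hTdeg
  have hTdvd : T ∣ X ^ (2 ^ n) + 1 := by
    rw [hfact]
    exact Finset.dvd_prod_of_mem _ hδ
  have hTnotunit : ¬IsUnit T := by
    intro hu
    have := natDegree_eq_zero_of_isUnit hu
    rw [hTdeg] at this
    exact absurd this (by positivity)
  obtain ⟨g, hgmonic, hgirr, hgdvd⟩ := T.exists_monic_irreducible_factor hTnotunit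
  have hgdvd' : g ∣ X ^ (2 ^ n) + 1 := hgdvd.trans hTdvd
  have hnum := aux_deg hcharF hgirr hgdvd'
  rw [hcard] at hnum
  have hqm : ∃ c : ℤ, Odd c ∧ (q : ℤ) + 1 = 2 ^ A * c := by
    refine ⟨(m : ℤ), by exact_mod_cast hm, ?_⟩
    exact_mod_cast hq1
  have hlow : 2 ^ (n + 1 - A) ≤ g.natDegree :=
    aux_nt hq3 hA hqm hn hgirr.natDegree_pos hnum
  have hup : g.natDegree ≤ 2 ^ (n - A + 1) := by
    have := natDegree_le_of_dvd hgdvd hTmonic.ne_zero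
    rwa [hTdeg] at this
  have hexp3 : n + 1 - A = n - A + 1 := by omega
  rw [hexp3] at hlow
  have hTeq : T = g := aux_monic_dvd_eq hgmonic hTmonic hgdvd (by rw [hTdeg]; exact hlow)
  rw [hTeq]
  exact hgirr
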